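/- Let D be a connected locally semicomplete digraph that is not a semicomplete digraph with a universal vertex, and in which no maximal weak hub is mixed. Then every vertex of D belongs to some weak hub; in particular every singleton {u} is a weak hub. -/
import Mathlib


/-- `A` is the arc relation of an oriented graph: no loops and no digons. -/
def IsOriented {V : Type*} (A : V → V → Prop) : Prop :=
  Irreflexive A ∧ ∀ x y, A x y → ¬ A y x

/-- `D` is strong: a directed path between each ordered pair of vertices. -/
def IsStrong {V : Type*} (A : V → V → Prop) : Prop :=
  ∀ x y : V, Relation.ReflTransGen A x y

/-- The set `S` induces a strong subdigraph (all paths staying inside `S`). -/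
def StrongOn {V : Type*} (A : V → V → Prop) (S : Set V) : Prop :=
  ∀ x ∈ S, ∀ y ∈ S, Relation.ReflTransGen (fun a b => a ∈ S ∧ b ∈ S ∧ A a b) x y

/-- The set `S` induces a tournament. -/
def TournamentOn {V : Type*} (A : V → V → Prop) (S : Set V) : Prop :=
  ∀ x ∈ S, ∀ y ∈ S, x ≠ y → A x y ∨ A y x

/-- The set `S` induces an acyclic digraph. -/
def AcyclicOn {V : Type*} (A : V → V → Prop) (S : Set V) : Prop :=
  ∀ x : V, ¬ Relation.TransGen (fun a b => a ∈ S ∧ b ∈ S ∧ A a b) x x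

/-- The set `S` induces a semicomplete digraph. -/
def SemicompleteOn {V : Type*} (A : V → V → Prop) (S : Set V) : Prop :=
  ∀ x ∈ S, ∀ y ∈ S, x ≠ y → A x y ∨ A y x

/-- `z` lies strictly inside the cyclic interval `]x,y[` for the cyclic order `σ`. -/
def CycBtw {V : Type*} [Fintype V] (σ : V ≃ Fin (Fintype.card V)) (x z y : V) : Prop :=
  0 < (σ z - σ x).val ∧ (σ z - σ x).val < (σ y - σ x).val

/-- In-round: a cyclic order such that for every arc `xy` and `z ∈ ]x,y[`, `zy` is an arc. -/
def InRound {V : Type*} [Fintype V] (A : V → V → Prop) : Prop :=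
  ∃ σ : V ≃ Fin (Fintype.card V), ∀ x y z : V, A x y → CycBtw σ x z y → A z y

/-- Out-round: a cyclic order such that for every arc `xy` and `z ∈ ]x,y[`, `xz` is an arc. -/
def OutRound {V : Type*} [Fintype V] (A : V → V → Prop) : Prop :=
  ∃ σ : V ≃ Fin (Fintype.card V), ∀ x y z : V, A x y → CycBtw σ x z y → A x z

/-- Every out-neighbourhood induces a transitive tournament. -/
def LocallyOutTransitive {V : Type*} (A : V → V → Prop) : Prop :=
  ∀ x : V, TournamentOn A {y | A x y} ∧ AcyclicOn A {y | A x y}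

/-- A hub: a nonempty set inducing a strong subdigraph, all of whose vertices are
in-neighbours of some vertex outside of it. -/
def Hub {V : Type*} (A : V → V → Prop) (H : Set V) : Prop :=
  H.Nonempty ∧ StrongOn A H ∧ ∃ x ∉ H, ∀ h ∈ H, A h x

/-- Locally semicomplete digraph: no loops, and every out- and in-neighbourhood
induces a semicomplete digraph (digons are allowed). -/
def LocallySemicomplete {V : Type*} (A : V → V → Prop) : Prop :=
  Irreflexive A ∧ (∀ x : V, SemicompleteOn A {y | A x y}) ∧
    ∀ x : V, SemicompleteOn A {y | A y x}

/-- The underlying undirected graph is connected. -/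
def ConnectedDigraph {V : Type*} (A : V → V → Prop) : Prop :=
  ∀ x y : V, Relation.ReflTransGen (fun a b => A a b ∨ A b a) x y

/-- A weak hub: a nonempty set inducing a strong subdigraph that is strictly
in-dominated or strictly out-dominated by some vertex outside of it. -/
def WeakHub {V : Type*} (A : V → V → Prop) (X : Set V) : Prop :=
  X.Nonempty ∧ StrongOn A X ∧
    ∃ x ∉ X, (∀ u ∈ X, A u x ∧ ¬ A x u) ∨ ∀ u ∈ X, A x u ∧ ¬ A u x

/-- A set `X` is mixed if some outside vertex has both an out-neighbour and an
in-neighbour in `X`. -/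
def MixedSet {V : Type*} (A : V → V → Prop) (X : Set V) : Prop :=
  ∃ x ∉ X, (∃ u ∈ X, A x u) ∧ ∃ v ∈ X, A v x

/-- `X` is an inclusion-wise maximal weak hub. -/
def MaxWeakHub {V : Type*} (A : V → V → Prop) (X : Set V) : Prop :=
  WeakHub A X ∧ ∀ Y : Set V, WeakHub A Y → X ⊆ Y → Y = X

theorem stmt15 {V : Type*} [Fintype V] (A : V → V → Prop)
    (hls : LocallySemicomplete A) (hconn : ConnectedDigraph A)
    (hnotsemi : ¬ ((∀ x y : V, x ≠ y → A x y ∨ A y x) ∧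
      ∃ x : V, ∀ y : V, y ≠ x → A x y ∧ A y x))
    (hnomix : ∀ Z : Set V, MaxWeakHub A Z → ¬ MixedSet A Z) :
    ∀ u : V, WeakHub A {u} := by
  obtain ⟨hirr, hout, hin⟩ := hls
  intro u
  refine ⟨⟨u, rfl⟩, ?_, ?_⟩
  · intro x hx y hy
    rcases hx with rfl
    rcases hy with rfl
    exact Relation.ReflTransGen.refl
  by_contra hno
  have hsym : ∀ x, A u x ↔ A x u := by
    intro x
    by_cases hxu : x = u
    · subst hxu; exact ⟨fun h => (hirr _ h).elim, fun h => (hirr _ h).elim⟩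
    constructor
    · intro h
      by_contra h'
      exact hno ⟨x, by simp [hxu], Or.inl (fun v hv => by
        rcases hv with rfl; exact ⟨h, h'⟩)⟩
    · intro h
      by_contra h'
      exact hno ⟨x, by simp [hxu], Or.inr (fun v hv => by
        rcases hv with rfl; exact ⟨h, h'⟩)⟩
  set X : Set V := insert u {x | A u x} with hX
  have hcross : ∀ s ∈ X, ∀ y, (A s y ∨ A y s) → y ∈ X := by
    intro s hs y hadj
    by_contra hyX
    have hyu : y ≠ u := fun h => hyX (h ▸ Set.mem_insert u _)
    have hnuy : ¬ A u y := fun h => hyX (Set.mem_insert_of_mem _ h)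
    have hnyu : ¬ A y u := fun h => hnuy ((hsym y).mpr h)
    rcases hs with rfl | hs
    · rcases hadj with h | h
      · exact hnuy h
      · exact hnyu h
    · have hsu : A s u := (hsym s).mp hs
      rcases hadj with h | h
      · have := hout s u hsu y h (Ne.symm hyu)
        rcases this with h' | h'
        · exact hnuy h'
        · exact hnyu h'
      · have := hin s u hs y h (Ne.symm hyu)
        rcases this with h' | h'
        · exact hnuy h'
        · exact hnyu h'
  have hall : ∀ y : V, y ∈ X := by
    intro y
    have hpath := hconn u y
    induction hpath with
    | refl => exact Set.mem_insert u _
    | tail _ hbc ih => exact hcross _ ih _ hbc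
  apply hnotsemi
  constructor
  · intro x y hxy
    have hx := hall x
    have hy := hall y
    rcases hx with rfl | hx
    · rcases hy with rfl | hy
      · exact absurd rfl hxy
      · exact Or.inl hy
    · rcases hy with rfl | hy
      · exact Or.inr hx
      · exact hout u x hx y hy hxy
  · refine ⟨u, fun y hyu => ?_⟩
    have hy := hall y
    rcases hy with rfl | hy
    · exact absurd rfl hyu
    · exact ⟨hy, (hsym y).mp hy⟩
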